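/- Let I be a fine normal ideal on κ such that E^κ_ω ∉ I. Then empty has a winning strategy in the Banach–Mazur game BM_{≤ω}(I,κ) (for instance, a strategy whose first move is E^κ_ω). -/

import Mathlib

open Set

noncomputable section

namespace BMPDGames

/-- `I` is an ideal on the (regular uncountable) ordinal `κ`:  a collection of subsets of
`κ` containing all singletons, closed under subsets and finite unions, with `κ ∉ I`. -/
def IsIdealOn (κ : Ordinal) (I : Set (Set Ordinal)) : Prop :=
  (∀ A ∈ I, A ⊆ Set.Iio κ) ∧
  (∀ β < κ, ({β} : Set Ordinal) ∈ I) ∧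
  (∀ A B : Set Ordinal, A ⊆ B → B ∈ I → A ∈ I) ∧
  (∀ A ∈ I, ∀ B ∈ I, A ∪ B ∈ I) ∧
  Set.Iio κ ∉ I

/-- `I` is fine: every bounded subset of `κ` belongs to `I`. -/
def IsFineIdeal (κ : Ordinal) (I : Set (Set Ordinal)) : Prop :=
  ∀ A : Set Ordinal, A ⊆ Set.Iio κ → (∃ β < κ, A ⊆ Set.Iio β) → A ∈ I

/-- `I` is normal: the diagonal union of `κ` many members of `I` belongs to `I`. -/
def IsNormalIdeal (κ : Ordinal) (I : Set (Set Ordinal)) : Prop :=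
  ∀ A : Ordinal → Set Ordinal, (∀ γ, γ < κ → A γ ∈ I) →
    {β : Ordinal | β < κ ∧ ∃ γ < β, β ∈ A γ} ∈ I

/-- `I` is a fine normal ideal on `κ`. -/
def FineNormalIdeal (κ : Ordinal) (I : Set (Set Ordinal)) : Prop :=
  IsIdealOn κ I ∧ IsFineIdeal κ I ∧ IsNormalIdeal κ I

/-- `κ` is (as an ordinal) a regular uncountable cardinal. -/
def RegUncountable (κ : Ordinal) : Prop :=
  κ.card.IsRegular ∧ Cardinal.aleph0 < κ.card ∧ κ.card.ord = κ

/-- `C` is a club (closed unbounded) subset of `κ`: it is closed under suprema of its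
bounded nonempty subsets and unbounded in `κ`. -/
def IsClubIn (κ : Ordinal) (C : Set Ordinal) : Prop :=
  C ⊆ Set.Iio κ ∧
  (∀ D : Set Ordinal, D ⊆ C → D.Nonempty → sSup D < κ → sSup D ∈ C) ∧
  (∀ β, β < κ → ∃ γ ∈ C, β < γ)

/-- `S` is a stationary subset of `κ`: it meets every club. -/
def IsStationaryIn (κ : Ordinal) (S : Set Ordinal) : Prop :=
  S ⊆ Set.Iio κ ∧ ∀ C : Set Ordinal, IsClubIn κ C → (S ∩ C).Nonempty

/-- The nonstationary ideal on `κ`: subsets of `κ` disjoint from some club. -/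
def NSIdeal (κ : Ordinal) : Set (Set Ordinal) :=
  {A | A ⊆ Set.Iio κ ∧ ∃ C : Set Ordinal, IsClubIn κ C ∧ A ∩ C = ∅}

/-- `E^κ_ω`, the set of ordinals below `κ` of cofinality `ω`. -/
def Ecofomega (κ : Ordinal) : Set Ordinal :=
  {α : Ordinal | α < κ ∧ Ordinal.cof α = Cardinal.aleph0}

/-- The intersection of the values `T β` for `β < α`. -/
def InterBelow (T : Ordinal → Set Ordinal) (α : Ordinal) : Set Ordinal :=
  ⋂ β ∈ Set.Iio α, T β

/-! ### The Banach–Mazur game `BM_{<ζ}(I,S)` (empty moves first at every stage).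

A strategy for a player is represented as a function giving that player's move at stage `α`
as a function of the opponent's moves (it may only depend on the moves made before the
player's move at stage `α`, which is the first conjunct in each definition below).  A
strategy is winning if it always produces legal moves (as long as the opponent has played
legally and the game is not yet over) and every run in which the opponent plays legally is
won by the player. -/

/-- `σ` is a winning strategy for the player *empty* in `BM_{<ζ}(I,S)`.
Here `T : Ordinal → Set Ordinal` ranges over the sequences of moves of nonempty, and
empty's move at stage `α` is `σ α T`. Empty wins a run iff at some stage `α < ζ`
the intersection of all moves made before stage `α` belongs to `I`. -/
def EmptyBMStratWins (ζ : Ordinal) (I : Set (Set Ordinal)) (S : Set Ordinal)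
    (σ : Ordinal → (Ordinal → Set Ordinal) → Set Ordinal) : Prop :=
  (∀ (α : Ordinal) (T T' : Ordinal → Set Ordinal),
      (∀ β < α, T β = T' β) → σ α T = σ α T') ∧
  ∀ T : Ordinal → Set Ordinal,
    (∀ α < ζ, (∀ β < α, T β ∉ I ∧ T β ⊆ σ β T) → InterBelow T α ∉ I →
      σ α T ∉ I ∧ σ α T ⊆ S ∧ ∀ β < α, σ α T ⊆ T β) ∧
    ((∀ α < ζ, T α ∉ I ∧ T α ⊆ σ α T) → ∃ α < ζ, InterBelow T α ∈ I)

/-- Empty has a winning strategy in `BM_{<ζ}(I,S)`. -/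
def EmptyWinsBM (ζ : Ordinal) (I : Set (Set Ordinal)) (S : Set Ordinal) : Prop :=
  ∃ σ, EmptyBMStratWins ζ I S σ

/-- Nonempty has a winning strategy in `BM_{<ζ}(I,S)`.
Here `Sq : Ordinal → Set Ordinal` ranges over the sequences of moves of empty, and
nonempty's move at stage `α` is `τ α Sq`.  The strategy must respond legally to legal
play by empty, and guarantee that empty is never stuck, i.e. that the intersection of
all previous moves never lies in `I` at any stage `α < ζ`. -/
def NonemptyWinsBM (ζ : Ordinal) (I : Set (Set Ordinal)) (S : Set Ordinal) : Prop :=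
  ∃ τ : Ordinal → (Ordinal → Set Ordinal) → Set Ordinal,
    (∀ (α : Ordinal) (Sq Sq' : Ordinal → Set Ordinal),
        (∀ β ≤ α, Sq β = Sq' β) → τ α Sq = τ α Sq') ∧
    ∀ Sq : Ordinal → Set Ordinal, ∀ α, α < ζ →
      ((∀ β ≤ α, Sq β ∉ I ∧ Sq β ⊆ S ∧ ∀ γ < β, Sq β ⊆ Sq γ ∩ τ γ Sq) →
        τ α Sq ∉ I ∧ τ α Sq ⊆ Sq α) ∧
      ((∀ β < α, Sq β ∉ I ∧ Sq β ⊆ S ∧ ∀ γ < β, Sq β ⊆ Sq γ ∩ τ γ Sq) →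
        InterBelow (fun β => Sq β ∩ τ β Sq) α ∉ I)

/-! ### The variant `BM'_{<ζ}(I,S)` in which nonempty makes the first move at stage `0`
(playing an `I`-positive `T 0 ⊆ S`), after which play continues as in `BM` with empty
moving first at every later stage. -/

/-- `σ` is a winning strategy for empty in `BM'_{<ζ}(I,S)` (`σ` is only used at
stages `α > 0`, since nonempty alone moves at stage `0`). -/
def EmptyBMPrimeStratWins (ζ : Ordinal) (I : Set (Set Ordinal)) (S : Set Ordinal)
    (σ : Ordinal → (Ordinal → Set Ordinal) → Set Ordinal) : Prop :=
  (∀ (α : Ordinal) (T T' : Ordinal → Set Ordinal),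
      (∀ β < α, T β = T' β) → σ α T = σ α T') ∧
  ∀ T : Ordinal → Set Ordinal,
    (∀ α, 0 < α → α < ζ → (T 0 ∉ I ∧ T 0 ⊆ S) →
      (∀ β, 0 < β → β < α → T β ∉ I ∧ T β ⊆ σ β T) → InterBelow T α ∉ I →
      σ α T ∉ I ∧ ∀ β < α, σ α T ⊆ T β) ∧
    ((0 < ζ → T 0 ∉ I ∧ T 0 ⊆ S) → (∀ α, 0 < α → α < ζ → T α ∉ I ∧ T α ⊆ σ α T) →
      ∃ α < ζ, InterBelow T α ∈ I)

/-- Empty has a winning strategy in `BM'_{<ζ}(I,S)`. -/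
def EmptyWinsBMPrime (ζ : Ordinal) (I : Set (Set Ordinal)) (S : Set Ordinal) : Prop :=
  ∃ σ, EmptyBMPrimeStratWins ζ I S σ

/-- Nonempty has a winning strategy in `BM'_{<ζ}(I,S)`: a first move `T0` (an
`I`-positive subset of `S`, provided the game has any stage at all) together with
responses `τ α Sq` to empty's moves `Sq β` (`0 < β ≤ α`) at all later stages `α`. -/
def NonemptyWinsBMPrime (ζ : Ordinal) (I : Set (Set Ordinal)) (S : Set Ordinal) : Prop :=
  ∃ T0 : Set Ordinal, ∃ τ : Ordinal → (Ordinal → Set Ordinal) → Set Ordinal,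
    (0 < ζ → T0 ∉ I ∧ T0 ⊆ S) ∧
    (∀ (α : Ordinal) (Sq Sq' : Ordinal → Set Ordinal),
        (∀ β ≤ α, Sq β = Sq' β) → τ α Sq = τ α Sq') ∧
    ∀ Sq : Ordinal → Set Ordinal, ∀ α, 0 < α → α < ζ →
      ((∀ β, 0 < β → β ≤ α →
          Sq β ∉ I ∧ Sq β ⊆ T0 ∧ ∀ γ, 0 < γ → γ < β → Sq β ⊆ Sq γ ∩ τ γ Sq) →
        τ α Sq ∉ I ∧ τ α Sq ⊆ Sq α) ∧
      ((∀ β, 0 < β → β < α →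
          Sq β ∉ I ∧ Sq β ⊆ T0 ∧ ∀ γ, 0 < γ → γ < β → Sq β ⊆ Sq γ ∩ τ γ Sq) →
        (T0 ∩ ⋂ β ∈ Set.Ioo (0 : Ordinal) α, (Sq β ∩ τ β Sq)) ∉ I)

/-! ### The pressing down game `PD_{<ζ}(I,S)`.

At each stage `α < ζ` empty plays a regressive function `f_α : κ → κ` and nonempty plays
a set `T_α ⊆ S` contained in all previous `T_β` on which `f_α` is constant.  Empty wins a
run iff `T_α ∈ I` for some `α < ζ`. -/

/-- Empty has a winning strategy in `PD_{<ζ}(I,S)`: a (history-dependent) choice of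
regressive functions such that in every run in which nonempty plays legally, some move
of nonempty lies in `I`. -/
def EmptyWinsPD (ζ : Ordinal) (I : Set (Set Ordinal)) (S : Set Ordinal) : Prop :=
  ∃ σ : Ordinal → (Ordinal → Set Ordinal) → (Ordinal → Ordinal),
    (∀ (α : Ordinal) (T T' : Ordinal → Set Ordinal),
        (∀ β < α, T β = T' β) → σ α T = σ α T') ∧
    (∀ (α : Ordinal) (T : Ordinal → Set Ordinal) (β : Ordinal), 0 < β → σ α T β < β) ∧
    ∀ T : Ordinal → Set Ordinal,
      (∀ α, α < ζ →
        T α ⊆ S ∧ (∀ β < α, T α ⊆ T β) ∧ ∃ c, ∀ x ∈ T α, σ α T x = c) →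
      ∃ α, α < ζ ∧ T α ∈ I

/-- Nonempty has a winning strategy in `PD_{<ζ}(I,S)`: responses `τ α g` to the
sequence `g` of regressive functions played by empty, which are always legal
(homogeneous subsets of `S` and of all previous responses) and never lie in `I`. -/
def NonemptyWinsPD (ζ : Ordinal) (I : Set (Set Ordinal)) (S : Set Ordinal) : Prop :=
  ∃ τ : Ordinal → (Ordinal → (Ordinal → Ordinal)) → Set Ordinal,
    (∀ (α : Ordinal) (g g' : Ordinal → (Ordinal → Ordinal)),
        (∀ β ≤ α, g β = g' β) → τ α g = τ α g') ∧
    ∀ g : Ordinal → (Ordinal → Ordinal), (∀ α β, 0 < β → g α β < β) →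
      ∀ α, α < ζ →
        τ α g ⊆ S ∧ (∀ β < α, τ α g ⊆ τ β g) ∧ (∃ c, ∀ x ∈ τ α g, g α x = c) ∧
        τ α g ∉ I

/-! ### The games of length `ω + 1` on `κ`: `BM_{≤ω}(I,S)` and the ideal game.

In `BM_{≤ω}(I,S)` the players move at the finite stages `n < ω` and empty wins a run iff
`⋂_{n<ω} S_n ∈ I`; in the ideal game (played on `κ` itself) empty wins iff
`⋂_{n<ω} S_n = ∅`. -/

/-- `σ` is a winning strategy for empty in `BM_{≤ω}(I,S)`. -/
def EmptyBMOmegaStratWins (I : Set (Set Ordinal)) (S : Set Ordinal)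
    (σ : ℕ → (ℕ → Set Ordinal) → Set Ordinal) : Prop :=
  (∀ (n : ℕ) (T T' : ℕ → Set Ordinal), (∀ m < n, T m = T' m) → σ n T = σ n T') ∧
  ∀ T : ℕ → Set Ordinal,
    (∀ n, (∀ m < n, T m ∉ I ∧ T m ⊆ σ m T) →
      σ n T ∉ I ∧ σ n T ⊆ S ∧ ∀ m < n, σ n T ⊆ T m) ∧
    ((∀ n, T n ∉ I ∧ T n ⊆ σ n T) → (⋂ n, σ n T) ∈ I)

/-- Empty has a winning strategy in `BM_{≤ω}(I,S)`. -/
def EmptyWinsBMOmega (I : Set (Set Ordinal)) (S : Set Ordinal) : Prop :=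
  ∃ σ, EmptyBMOmegaStratWins I S σ

/-- Nonempty has a winning strategy in `BM_{≤ω}(I,S)`. -/
def NonemptyWinsBMOmega (I : Set (Set Ordinal)) (S : Set Ordinal) : Prop :=
  ∃ τ : ℕ → (ℕ → Set Ordinal) → Set Ordinal,
    (∀ (n : ℕ) (Sq Sq' : ℕ → Set Ordinal), (∀ m ≤ n, Sq m = Sq' m) → τ n Sq = τ n Sq') ∧
    ∀ Sq : ℕ → Set Ordinal,
      (∀ n, (∀ m ≤ n, Sq m ∉ I ∧ Sq m ⊆ S ∧ ∀ k < m, Sq m ⊆ Sq k ∩ τ k Sq) →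
        τ n Sq ∉ I ∧ τ n Sq ⊆ Sq n) ∧
      ((∀ n, Sq n ∉ I ∧ Sq n ⊆ S ∧ ∀ k < n, Sq n ⊆ Sq k ∩ τ k Sq) →
        (⋂ n, Sq n) ∉ I)

/-- Empty has a winning strategy in the ideal game on `I` (played on `κ`). -/
def EmptyWinsIdealGame (κ : Ordinal) (I : Set (Set Ordinal)) : Prop :=
  ∃ σ : ℕ → (ℕ → Set Ordinal) → Set Ordinal,
    (∀ (n : ℕ) (T T' : ℕ → Set Ordinal), (∀ m < n, T m = T' m) → σ n T = σ n T') ∧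
    ∀ T : ℕ → Set Ordinal,
      (∀ n, (∀ m < n, T m ∉ I ∧ T m ⊆ σ m T) →
        σ n T ∉ I ∧ σ n T ⊆ Set.Iio κ ∧ ∀ m < n, σ n T ⊆ T m) ∧
      ((∀ n, T n ∉ I ∧ T n ⊆ σ n T) → (⋂ n, σ n T) = ∅)

/-- Nonempty has a winning strategy in the ideal game on `I` (played on `κ`). -/
def NonemptyWinsIdealGame (κ : Ordinal) (I : Set (Set Ordinal)) : Prop :=
  ∃ τ : ℕ → (ℕ → Set Ordinal) → Set Ordinal,
    (∀ (n : ℕ) (Sq Sq' : ℕ → Set Ordinal), (∀ m ≤ n, Sq m = Sq' m) → τ n Sq = τ n Sq') ∧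
    ∀ Sq : ℕ → Set Ordinal,
      (∀ n, (∀ m ≤ n, Sq m ∉ I ∧ Sq m ⊆ Set.Iio κ ∧ ∀ k < m, Sq m ⊆ Sq k ∩ τ k Sq) →
        τ n Sq ∉ I ∧ τ n Sq ⊆ Sq n) ∧
      ((∀ n, Sq n ∉ I ∧ Sq n ⊆ Set.Iio κ ∧ ∀ k < n, Sq n ⊆ Sq k ∩ τ k Sq) →
        (⋂ n, Sq n).Nonempty)

open Classical in
/-- An ω-sequence witnessing cofinality ω, chosen by choice. -/
noncomputable def eseq (α : Ordinal) : ℕ → Ordinal :=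
  if h : ∃ g : ℕ → Ordinal, (∀ n, g n < α) ∧ Ordinal.lsub g = α then h.choose else fun _ => 0

theorem eseq_spec {α : Ordinal} (h : Ordinal.cof α = Cardinal.aleph0) :
    (∀ n, eseq α n < α) ∧ Ordinal.lsub (eseq α) = α := by
  have hex : ∃ g : ℕ → Ordinal, (∀ n, g n < α) ∧ Ordinal.lsub g = α := by
    obtain ⟨ι, f, hf, hι⟩ := Ordinal.exists_lsub_cof α
    rw [h] at hι
    have hco : Countable ι := Cardinal.mk_le_aleph0_iff.mp hι.le
    have hin : Infinite ι := Cardinal.infinite_iff.mpr hι.ge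
    obtain ⟨d⟩ := nonempty_denumerable ι
    have eqv : ι ≃ ℕ := Denumerable.eqv ι
    refine ⟨f ∘ eqv.symm, fun n => ?_, le_antisymm (Ordinal.lsub_le fun n => ?_) ?_⟩
    · rw [← hf]; exact Ordinal.lt_lsub f _
    · rw [← hf]; exact Ordinal.lt_lsub f _
    · rw [← hf, Ordinal.lsub_le_iff]
      intro i
      have := Ordinal.lt_lsub (f ∘ eqv.symm) (eqv i)
      simpa using this
  rw [eseq, dif_pos hex]
  exact hex.choose_spec

/-- Pressing down: a regressive function on an `I`-positive set is constant on an
`I`-positive subset. -/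
theorem pressing_down {κ : Ordinal} {I : Set (Set Ordinal)}
    (hI : FineNormalIdeal κ I) {S : Set Ordinal} (hS : S ∉ I) (hSκ : S ⊆ Set.Iio κ)
    (f : Ordinal → Ordinal) (hf : ∀ β ∈ S, f β < β) :
    ∃ B, B ⊆ S ∧ B ∉ I ∧ ∃ c, ∀ x ∈ B, f x = c := by
  by_contra hno
  push_neg at hno
  have hA : ∀ γ, γ < κ → S ∩ {x | f x = γ} ∈ I := by
    intro γ _
    by_contra hpos
    obtain ⟨x, hx, hne⟩ := hno _ inter_subset_left hpos γ
    exact hne hx.2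
  have hd := hI.2.2 (fun γ => S ∩ {x | f x = γ}) hA
  have hsub : S ⊆ {β : Ordinal | β < κ ∧ ∃ γ < β, β ∈ S ∩ {x | f x = γ}} := by
    intro β hβ
    exact ⟨hSκ hβ, f β, hf β hβ, hβ, rfl⟩
  exact hS (hI.1.2.2.1 _ _ hsub hd)

open Classical in
/-- The homogeneous-set choice used by empty's strategy. -/
noncomputable def stepBM (I : Set (Set Ordinal)) (n : ℕ) (A : Set Ordinal) : Set Ordinal :=
  if h : ∃ B, B ⊆ A ∧ B ∉ I ∧ ∃ c, ∀ x ∈ B, eseq x n = c then h.choose else A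

/-- Empty's winning strategy in `BM_{≤ω}(I, κ)`. -/
noncomputable def sigmaBM (κ : Ordinal) (I : Set (Set Ordinal)) :
    ℕ → (ℕ → Set Ordinal) → Set Ordinal
  | 0, _ => Ecofomega κ
  | n + 1, T => stepBM I n (T n)

theorem statement19' (κ : Ordinal) (I : Set (Set Ordinal))
    (hκ : RegUncountable κ) (hI : FineNormalIdeal κ I)
    (hE : Ecofomega κ ∉ I) :
    EmptyBMOmegaStratWins I (Set.Iio κ) (sigmaBM κ I) := by
  obtain ⟨⟨hIio, hsing, hdown, hunion, hκI⟩, hfine, hnorm⟩ := hI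
  have hκ0 : (0 : Ordinal) < κ := by
    by_contra h
    push_neg at h
    rw [nonpos_iff_eq_zero] at h
    subst h
    simpa using hκ.2.1
  constructor
  · rintro n T T' h
    cases n with
    | zero => rfl
    | succ m => simp only [sigmaBM, h m (Nat.lt_succ_self m)]
  intro T
  -- the key invariant
  have key : ∀ n, (∀ m, m < n → T m ∉ I ∧ T m ⊆ sigmaBM κ I m T) →
      sigmaBM κ I n T ∉ I ∧ sigmaBM κ I n T ⊆ Ecofomega κ ∧
      (∀ m, m < n → sigmaBM κ I n T ⊆ T m) ∧
      (∀ n', n = n' + 1 →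
        ∃ B, B ⊆ T n' ∧ B ∉ I ∧ ∃ c, ∀ x ∈ B, eseq x n' = c) := by
    intro n
    induction n with
    | zero =>
      intro _
      refine ⟨hE, subset_rfl, fun m hm => absurd hm (Nat.not_lt_zero m), fun n' h => by omega⟩
    | succ k ih =>
      intro hleg
      have ihk := ih (fun m hm => hleg m (hm.trans (Nat.lt_succ_self k)))
      have hTk := hleg k (Nat.lt_succ_self k)
      have hTkE : T k ⊆ Ecofomega κ := hTk.2.trans ihk.2.1
      have hTkκ : T k ⊆ Set.Iio κ := fun x hx => (hTkE hx).1
      have hex : ∃ B, B ⊆ T k ∧ B ∉ I ∧ ∃ c, ∀ x ∈ B, eseq x k = c := by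
        refine pressing_down ⟨⟨hIio, hsing, hdown, hunion, hκI⟩, hfine, hnorm⟩
          hTk.1 hTkκ (fun x => eseq x k) (fun β hβ => ?_)
        have hcof := (hTkE hβ).2
        have := (eseq_spec hcof).1 k
        exact this
      have hstep : sigmaBM κ I (k + 1) T = hex.choose := by
        simp only [sigmaBM, stepBM, dif_pos hex]
      obtain ⟨hB1, hB2, hB3⟩ := hex.choose_spec
      rw [hstep]
      refine ⟨hB2, hB1.trans hTkE, ?_, ?_⟩
      · intro m hm
        rcases Nat.lt_succ_iff_lt_or_eq.mp hm with hm | hm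
        · exact hB1.trans (hTk.2.trans (ihk.2.2.1 m hm))
        · subst hm; exact hB1
      · intro n' hn'
        have : n' = k := by omega
        subst this
        exact ⟨hex.choose, hB1, hB2, hB3⟩
  constructor
  · intro n hleg
    obtain ⟨h1, h2, h3, _⟩ := key n hleg
    exact ⟨h1, fun x hx => (h2 hx).1, h3⟩
  · intro hleg
    have hlegal : ∀ n, ∀ m, m < n → T m ∉ I ∧ T m ⊆ sigmaBM κ I m T :=
      fun n m _ => hleg m
    -- get the constants
    have hc : ∀ n, ∃ c, ∀ x ∈ sigmaBM κ I (n + 1) T, eseq x n = c := by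
      intro n
      obtain ⟨_, _, _, h4⟩ := key (n + 1) (hlegal (n + 1))
      obtain ⟨B, hB1, hB2, c, hB3⟩ := h4 n rfl
      have hex : ∃ B, B ⊆ T n ∧ B ∉ I ∧ ∃ c, ∀ x ∈ B, eseq x n = c := ⟨B, hB1, hB2, c, hB3⟩
      have hstep : sigmaBM κ I (n + 1) T = hex.choose := by
        simp only [sigmaBM, stepBM, dif_pos hex]
      obtain ⟨_, _, c', hc'⟩ := hex.choose_spec
      exact ⟨c', by rw [hstep]; exact hc'⟩
    choose c hcspec using hc
    have hsub : (⋂ n, sigmaBM κ I n T) ⊆ {Ordinal.lsub c} := by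
      intro x hx
      have hx0 : x ∈ Ecofomega κ := mem_iInter.mp hx 0
      have hxval : ∀ n, eseq x n = c n := fun n => hcspec n x (mem_iInter.mp hx (n + 1))
      have hspec := eseq_spec hx0.2
      have : x = Ordinal.lsub c := by
        rw [← hspec.2]
        congr 1
        funext n
        exact (hxval n)
      exact this
    rcases Set.eq_empty_or_nonempty (⋂ n, sigmaBM κ I n T) with hemp | ⟨x, hx⟩
    · rw [hemp]
      exact hdown _ _ (empty_subset _) (hsing 0 hκ0)
    · have hxκ : x < κ := (mem_iInter.mp hx 0 : x ∈ Ecofomega κ).1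
      have hxl : x ∈ ({Ordinal.lsub c} : Set Ordinal) := hsub hx
      rw [mem_singleton_iff] at hxl
      exact hdown _ _ hsub (by rw [← hxl]; exact hsing x hxκ)

/-- If `E^κ_ω ∉ I`, then empty has a winning strategy in `BM_{≤ω}(I,κ)`;
for instance, one whose first move is `E^κ_ω`. -/
theorem statement19 (κ : Ordinal) (I : Set (Set Ordinal))
    (hκ : RegUncountable κ) (hI : FineNormalIdeal κ I)
    (hE : Ecofomega κ ∉ I) :
    EmptyWinsBMOmega I (Set.Iio κ) ∧
    ∃ σ, EmptyBMOmegaStratWins I (Set.Iio κ) σ ∧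
      ∀ T : ℕ → Set Ordinal, σ 0 T = Ecofomega κ := by
  have h := statement19' κ I hκ hI hE
  exact ⟨⟨_, h⟩, _, h, fun T => rfl⟩

end BMPDGames
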